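/- Let (|I_1|, ..., |I_K|) be a multinomial random vector with parameters n and p = (p_1,...,p_K) (i.e., |I_k| counts the number of n i.i.d. trials landing in category k). Then for any δ > 0, with probability at least 1 − δ, ∑_{k=1}^K |p_k − |I_k|/n| ≤ sqrt((2K ln 2 + 2 ln(1/δ)) / n). -/

import Mathlib

open MeasureTheory Real
open scoped Classical


lemma BHC_D_pos {p : ℝ} (hp0 : 0 ≤ p) (hp1 : p ≤ 1) (t : ℝ) :
    0 < 1 - p + p * exp t := by
  rcases hp0.eq_or_lt with h | h
  · simp [← h]
  · have := mul_pos h (exp_pos t); linarith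

lemma BHC_hoeffding_log {p : ℝ} (hp0 : 0 ≤ p) (hp1 : p ≤ 1) (t : ℝ) :
    log (1 - p + p * exp t) ≤ t * p + t ^ 2 / 8 := by
  set D : ℝ → ℝ := fun x => 1 - p + p * exp x with hDdef
  have hD : ∀ x, 0 < D x := fun x => BHC_D_pos hp0 hp1 x
  have hDd : ∀ x, HasDerivAt D (p * exp x) x := fun x => by
    exact ((Real.hasDerivAt_exp x).const_mul p).const_add (1 - p)
  set g : ℝ → ℝ := fun x => x ^ 2 / 8 + x * p - log (D x) with hgdef
  set g' : ℝ → ℝ := fun x => x / 4 + p - p * exp x / D x with hg'def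
  have hgd : ∀ x, HasDerivAt g (g' x) x := by
    intro x
    have h1 : HasDerivAt (fun x : ℝ => x ^ 2 / 8 + x * p) (x / 4 + p) x := by
      have := ((hasDerivAt_pow 2 x).div_const 8).add ((hasDerivAt_id x).mul_const p)
      refine this.congr_deriv ?_
      simp; ring
    have h2 : HasDerivAt (fun x => log (D x)) (p * exp x / D x) x :=
      (hDd x).log (hD x).ne'
    exact h1.sub h2
  have hg'd : ∀ x, HasDerivAt g' (1 / 4 - p * exp x * (1 - p) / (D x) ^ 2) x := by
    intro x
    have h1 : HasDerivAt (fun x : ℝ => x / 4 + p) (1 / 4) x := by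
      simpa using ((hasDerivAt_id x).div_const 4).add_const p
    have h2 : HasDerivAt (fun x => p * exp x / D x)
        ((p * exp x * D x - p * exp x * (p * exp x)) / (D x) ^ 2) x :=
      ((Real.hasDerivAt_exp x).const_mul p).div (hDd x) (hD x).ne'
    have h3 := h1.sub h2
    refine h3.congr_deriv ?_
    have hDx : D x = 1 - p + p * exp x := rfl
    rw [hDx]
    ring
  have hg''0 : ∀ x, 0 ≤ 1 / 4 - p * exp x * (1 - p) / (D x) ^ 2 := by
    intro x
    rw [sub_nonneg, div_le_iff₀ (pow_pos (hD x) 2)]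
    have hDx : D x = 1 - p + p * exp x := rfl
    nlinarith [sq_nonneg ((1 - p) - p * exp x), exp_pos x, mul_nonneg hp0 (exp_pos x).le]
  have hg'mono : Monotone g' :=
    monotone_of_deriv_nonneg (fun x => (hg'd x).differentiableAt)
      (fun x => by rw [(hg'd x).deriv]; exact hg''0 x)
  have hg'0 : g' 0 = 0 := by simp [hg'def, hDdef]
  have hgdiff : Differentiable ℝ g := fun x => (hgd x).differentiableAt
  have hg0 : g 0 = 0 := by simp [hgdef, hDdef]
  have key : 0 ≤ g t := by
    rcases le_or_gt 0 t with h | h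
    · have hmono : MonotoneOn g (Set.Ici 0) := by
        apply monotoneOn_of_deriv_nonneg (convex_Ici 0) hgdiff.continuous.continuousOn
          (hgdiff.differentiableOn)
        intro x hx
        rw [(hgd x).deriv]
        rw [interior_Ici] at hx
        have := hg'mono (le_of_lt hx)
        rw [hg'0] at this; exact this
      have := hmono Set.self_mem_Ici (Set.mem_Ici.2 h) h
      rwa [hg0] at this
    · have hanti : AntitoneOn g (Set.Iic 0) := by
        apply antitoneOn_of_deriv_nonpos (convex_Iic 0) hgdiff.continuous.continuousOn
          (hgdiff.differentiableOn)
        intro x hx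
        rw [(hgd x).deriv]
        rw [interior_Iic] at hx
        have := hg'mono (le_of_lt hx)
        rw [hg'0] at this; exact this
      have := hanti (Set.mem_Iic.2 h.le) Set.self_mem_Iic h.le
      rwa [hg0] at this
  have hgt : g t = t ^ 2 / 8 + t * p - log (1 - p + p * exp t) := rfl
  linarith [key.trans_eq hgt]

lemma BHC_tot (K : ℕ) (ν : Measure (Fin K)) [IsProbabilityMeasure ν] :
    ∑ k : Fin K, (ν {k}).toReal = 1 := by
  have h := integral_fintype (μ := ν) (f := fun _ : Fin K => (1:ℝ)) (Integrable.of_finite)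
  exact (by simp : ∑ k : Fin K, ν.real {k} = 1)

lemma BHC_perA (K n : ℕ) (ν : Measure (Fin K)) [IsProbabilityMeasure ν]
    (A : Finset (Fin K)) (ε : ℝ) (hε : 0 ≤ ε) :
    (Measure.pi fun _ : Fin n => ν)
      {ω : Fin n → Fin K | (n:ℝ) * ε ≤ ∑ i : Fin n,
        ((if ω i ∈ A then (1:ℝ) else 0) - ∑ k ∈ A, (ν {k}).toReal)} ≤
      ENNReal.ofReal (Real.exp (-(2 * n * ε ^ 2))) := by
  set p : Fin K → ℝ := fun k => (ν {k}).toReal with hp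
  set pA : ℝ := ∑ k ∈ A, p k with hpA
  have hpk0 : ∀ k, 0 ≤ p k := fun k => ENNReal.toReal_nonneg
  have htot : ∑ k : Fin K, p k = 1 := BHC_tot K ν
  have hpA0 : 0 ≤ pA := Finset.sum_nonneg fun k _ => hpk0 k
  have hpA1 : pA ≤ 1 := htot ▸ Finset.sum_le_sum_of_subset_of_nonneg (Finset.subset_univ A)
      (fun k _ _ => hpk0 k)
  set t : ℝ := 4 * ε with ht
  have ht0 : 0 ≤ t := by positivity
  set f : Fin K → ℝ := fun k => (if k ∈ A then (1:ℝ) else 0) - pA with hf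
  set X : (Fin n → Fin K) → ℝ := fun ω => ∑ i : Fin n, f (ω i) with hX
  set μ : Measure (Fin n → Fin K) := Measure.pi fun _ : Fin n => ν with hμ
  letI : MeasureSpace (Fin K) := { toMeasurableSpace := inferInstance, volume := ν }
  have hvol : μ = (volume : Measure (Fin n → Fin K)) := rfl
  have chern := ProbabilityTheory.measure_ge_le_exp_mul_mgf (μ := μ) (X := X)
      ((n:ℝ) * ε) ht0 (Integrable.of_finite)
  have hint1 : ∫ x : Fin K, exp (t * f x) ∂ν
      = exp (-(t * pA)) * (1 - pA + pA * exp t) := by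
    rw [integral_fintype Integrable.of_finite]
    simp only [smul_eq_mul]
    have step : ∀ k : Fin K, p k * exp (t * f k)
        = exp (-(t * pA)) * (if k ∈ A then p k * exp t else p k) := by
      intro k
      by_cases hk : k ∈ A
      · simp only [hf, hk, if_true]
        rw [show t * (1 - pA) = -(t * pA) + t by ring, exp_add]
        ring
      · simp only [hf, hk, if_false]
        rw [show t * ((0:ℝ) - pA) = -(t * pA) by ring]
        ring
    have h1 : Finset.univ.filter (· ∈ A) = A := by ext k; simp
    have h2 : ∑ k ∈ Finset.univ.filter (fun k => ¬ k ∈ A), p k = 1 - pA := by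
      have h3 := Finset.sum_filter_add_sum_filter_not Finset.univ (· ∈ A) p
      rw [h1, htot] at h3
      linarith
    calc ∑ k : Fin K, p k * exp (t * f k)
        = ∑ k : Fin K, exp (-(t * pA)) * (if k ∈ A then p k * exp t else p k) :=
          Finset.sum_congr rfl fun k _ => step k
      _ = exp (-(t * pA)) * ∑ k : Fin K, (if k ∈ A then p k * exp t else p k) := by
          rw [← Finset.mul_sum]
      _ = exp (-(t * pA)) * (pA * exp t + (1 - pA)) := by
          rw [Finset.sum_ite, h1, h2, ← Finset.sum_mul]
      _ = exp (-(t * pA)) * (1 - pA + pA * exp t) := by ring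
  have hmgf : ProbabilityTheory.mgf X μ t = (exp (-(t * pA)) * (1 - pA + pA * exp t)) ^ n := by
    rw [← hint1]
    have : ProbabilityTheory.mgf X μ t = ∫ ω, ∏ i : Fin n, exp (t * f (ω i)) ∂μ := by
      rw [ProbabilityTheory.mgf]
      congr 1
      funext ω
      simp only [hX, Finset.mul_sum, exp_sum]
    rw [this, hvol]
    have := MeasureTheory.integral_fintype_prod_eq_pow (ι := Fin n) (fun x : Fin K => exp (t * f x)) (μ := (volume : Measure (Fin K)))
    rw [Fintype.card_fin] at this
    exact this
  have hber : exp (-(t * pA)) * (1 - pA + pA * exp t) ≤ exp (t ^ 2 / 8) := by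
    have hlog := BHC_hoeffding_log hpA0 hpA1 t
    have heq : exp (-(t * pA)) * (1 - pA + pA * exp t)
        = exp (log (1 - pA + pA * exp t) - t * pA) := by
      rw [exp_sub, exp_log (BHC_D_pos hpA0 hpA1 t), exp_neg, div_eq_mul_inv]
      ring
    rw [heq]
    exact exp_le_exp.2 (by linarith)
  have hbase0 : 0 ≤ exp (-(t * pA)) * (1 - pA + pA * exp t) :=
    le_of_lt (mul_pos (exp_pos _) (BHC_D_pos hpA0 hpA1 t))
  have hmgfle : ProbabilityTheory.mgf X μ t ≤ exp ((n : ℝ) * (t ^ 2 / 8)) := by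
    rw [hmgf]
    calc (exp (-(t * pA)) * (1 - pA + pA * exp t)) ^ n ≤ exp (t ^ 2 / 8) ^ n :=
          pow_le_pow_left₀ hbase0 hber n
      _ = exp ((n : ℝ) * (t ^ 2 / 8)) := (exp_nat_mul _ n).symm
  have hfinal : (μ {ω | (n:ℝ) * ε ≤ X ω}).toReal ≤ exp (-(2 * n * ε ^ 2)) := by
    calc (μ {ω | (n:ℝ) * ε ≤ X ω}).toReal
        ≤ exp (-t * ((n:ℝ) * ε)) * ProbabilityTheory.mgf X μ t := chern
      _ ≤ exp (-t * ((n:ℝ) * ε)) * exp ((n : ℝ) * (t ^ 2 / 8)) := by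
          exact mul_le_mul_of_nonneg_left hmgfle (exp_pos _).le
      _ = exp (-(2 * n * ε ^ 2)) := by
          rw [← exp_add]
          congr 1
          rw [ht]
          ring
  have hne : μ {ω | (n:ℝ) * ε ≤ X ω} ≠ ⊤ := measure_ne_top _ _
  calc μ {ω : Fin n → Fin K | (n:ℝ) * ε ≤ ∑ i : Fin n,
        ((if ω i ∈ A then (1:ℝ) else 0) - ∑ k ∈ A, (ν {k}).toReal)}
      = ENNReal.ofReal ((μ {ω | (n:ℝ) * ε ≤ X ω}).toReal) := (ENNReal.ofReal_toReal hne).symm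
    _ ≤ ENNReal.ofReal (exp (-(2 * n * ε ^ 2))) := ENNReal.ofReal_le_ofReal hfinal

/-- Bretagnolle–Huber–Carol inequality for multinomial frequencies, in confidence form. -/
theorem stmt5 (K n : ℕ) (hn : 0 < n) (ν : Measure (Fin K)) [IsProbabilityMeasure ν]
    (δ : ℝ) (hδ : 0 < δ) :
    ENNReal.ofReal (1 - δ) ≤
      (Measure.pi fun _ : Fin n => ν) {ω : Fin n → Fin K |
        ∑ k : Fin K,
            |(ν {k}).toReal - ((Finset.univ.filter fun i : Fin n => ω i = k).card : ℝ) / n| ≤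
          Real.sqrt ((2 * K * Real.log 2 + 2 * Real.log (1 / δ)) / n)} := by
  rcases le_or_gt 1 δ with hδ1 | hδ1
  · rw [ENNReal.ofReal_eq_zero.2 (by linarith)]
    exact bot_le
  have hnR : (0:ℝ) < n := Nat.cast_pos.2 hn
  have hnne : (n:ℝ) ≠ 0 := hnR.ne'
  set p : Fin K → ℝ := fun k => (ν {k}).toReal with hp
  set q : (Fin n → Fin K) → Fin K → ℝ :=
    fun ω k => ((Finset.univ.filter fun i : Fin n => ω i = k).card : ℝ) / n with hq
  set lam : ℝ := Real.sqrt ((2 * K * Real.log 2 + 2 * Real.log (1 / δ)) / n) with hlam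
  set μ : Measure (Fin n → Fin K) := Measure.pi fun _ : Fin n => ν with hμ
  set ε : ℝ := lam / 2 with hε
  have hlog2 : (0:ℝ) ≤ Real.log 2 := Real.log_nonneg one_le_two
  have hlogδ : (0:ℝ) ≤ Real.log (1 / δ) :=
    Real.log_nonneg (one_le_one_div hδ hδ1.le)
  have hnum : (0:ℝ) ≤ 2 * K * Real.log 2 + 2 * Real.log (1 / δ) := by positivity
  have hlam0 : 0 ≤ lam := Real.sqrt_nonneg _
  have hε0 : 0 ≤ ε := by rw [hε]; linarith
  have hlamsq : lam ^ 2 = (2 * K * Real.log 2 + 2 * Real.log (1 / δ)) / n := by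
    rw [hlam, sq_sqrt (by positivity)]
  have hkey : 2 * (n:ℝ) * ε ^ 2 = K * Real.log 2 + Real.log (1 / δ) := by
    have hε2 : ε ^ 2 = lam ^ 2 / 4 := by rw [hε]; ring
    rw [hε2, hlamsq]
    field_simp
    ring
  have hexp : Real.exp (-(2 * (n:ℝ) * ε ^ 2)) = δ / 2 ^ K := by
    rw [hkey, neg_add, Real.exp_add, Real.exp_neg, Real.exp_neg,
      Real.exp_log (by positivity : (0:ℝ) < 1 / δ), Real.exp_nat_mul, Real.exp_log two_pos]
    rw [one_div, inv_inv]
    rw [div_eq_mul_inv δ]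
    ring
  have hsump : ∑ k : Fin K, p k = 1 := BHC_tot K ν
  have hpk0 : ∀ k, 0 ≤ p k := fun k => ENNReal.toReal_nonneg
  -- the inclusion step
  have hincl : ∀ ω : Fin n → Fin K, ¬ (∑ k : Fin K, |p k - q ω k| ≤ lam) →
      ∃ A : Finset (Fin K), (n:ℝ) * ε ≤ ∑ i : Fin n,
        ((if ω i ∈ A then (1:ℝ) else 0) - ∑ k ∈ A, p k) := by
    intro ω hω
    have hlt : lam < ∑ k : Fin K, |p k - q ω k| := not_le.1 hω
    set c : Fin K → ℝ := fun k => ((Finset.univ.filter fun i : Fin n => ω i = k).card : ℝ) with hc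
    have hqc : ∀ k, q ω k = c k / n := fun k => rfl
    have hsumc : ∑ k : Fin K, c k = n := by
      have h := Finset.card_eq_sum_card_fiberwise
        (f := ω) (s := Finset.univ) (t := Finset.univ) (fun i _ => Finset.mem_univ _)
      rw [Finset.card_univ, Fintype.card_fin] at h
      rw [hc]
      conv_rhs => rw [h]
      push_cast
      rfl
    have hsumq : ∑ k : Fin K, q ω k = 1 := by
      simp only [hqc]
      rw [← Finset.sum_div, hsumc, div_self hnne]
    set A : Finset (Fin K) := Finset.univ.filter fun k => p k < q ω k with hA
    refine ⟨A, ?_⟩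
    set Spos : ℝ := ∑ k ∈ A, (q ω k - p k) with hSpos
    set Sneg : ℝ := ∑ k ∈ Finset.univ.filter (fun k => ¬ p k < q ω k), (q ω k - p k) with hSneg
    have e0 : Spos + Sneg = 0 := by
      rw [hSpos, hSneg, Finset.sum_filter_add_sum_filter_not, Finset.sum_sub_distrib,
        hsumq, hsump]
      ring
    have e1 : ∑ k : Fin K, |p k - q ω k| = Spos - Sneg := by
      rw [← Finset.sum_filter_add_sum_filter_not Finset.univ (fun k => p k < q ω k)
        (fun k => |p k - q ω k|)]
      have eA : ∑ k ∈ A, |p k - q ω k| = Spos := by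
        refine Finset.sum_congr rfl fun k hk => ?_
        have hk' := (Finset.mem_filter.1 hk).2
        rw [abs_of_neg (by linarith)]
        ring
      have eB : ∑ k ∈ Finset.univ.filter (fun k => ¬ p k < q ω k), |p k - q ω k| = -Sneg := by
        rw [hSneg, ← Finset.sum_neg_distrib]
        refine Finset.sum_congr rfl fun k hk => ?_
        have hk' := (Finset.mem_filter.1 hk).2
        rw [abs_of_nonneg (by push_neg at hk'; linarith)]
        ring
      rw [eA, eB]
      ring
    have hSposlt : ε < Spos := by
      rw [hε]
      linarith
    have hcnt : ∑ i : Fin n, (if ω i ∈ A then (1:ℝ) else 0) = ∑ k ∈ A, c k := by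
      have per : ∀ i : Fin n, (if ω i ∈ A then (1:ℝ) else 0)
          = ∑ k ∈ A, (if ω i = k then (1:ℝ) else 0) := by
        intro i
        rw [Finset.sum_ite_eq A (ω i) (fun _ => (1:ℝ))]
      rw [Finset.sum_congr rfl fun i _ => per i, Finset.sum_comm]
      refine Finset.sum_congr rfl fun k _ => ?_
      rw [hc]
      simp [Finset.sum_boole, eq_comm]
    have hmul : (n:ℝ) * Spos = ∑ k ∈ A, c k - (n:ℝ) * ∑ k ∈ A, p k := by
      rw [hSpos, Finset.mul_sum, Finset.mul_sum, ← Finset.sum_sub_distrib]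
      refine Finset.sum_congr rfl fun k _ => ?_
      rw [hqc k]
      field_simp
    have hgoal : ∑ i : Fin n, ((if ω i ∈ A then (1:ℝ) else 0) - ∑ k ∈ A, p k)
        = ∑ k ∈ A, c k - (n:ℝ) * ∑ k ∈ A, p k := by
      rw [Finset.sum_sub_distrib, hcnt, Finset.sum_const, Finset.card_univ, Fintype.card_fin,
        nsmul_eq_mul]
    rw [hgoal, ← hmul]
    have := mul_lt_mul_of_pos_left hSposlt hnR
    linarith
  -- union bound
  set E : Finset (Fin K) → Set (Fin n → Fin K) := fun A =>
    {ω : Fin n → Fin K | (n:ℝ) * ε ≤ ∑ i : Fin n,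
      ((if ω i ∈ A then (1:ℝ) else 0) - ∑ k ∈ A, p k)} with hE
  have hU : μ (⋃ A : Finset (Fin K), E A) ≤ ENNReal.ofReal δ := by
    calc μ (⋃ A : Finset (Fin K), E A) ≤ ∑' A : Finset (Fin K), μ (E A) := measure_iUnion_le _
      _ = ∑ A : Finset (Fin K), μ (E A) := tsum_fintype _
      _ ≤ ∑ A : Finset (Fin K), ENNReal.ofReal (δ / 2 ^ K) := by
          refine Finset.sum_le_sum fun A _ => ?_
          have h := BHC_perA K n ν A ε hε0
          rwa [hexp] at h
      _ = ENNReal.ofReal δ := by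
          rw [Finset.sum_const, Finset.card_univ, Fintype.card_finset, Fintype.card_fin,
            nsmul_eq_mul]
          rw [← ENNReal.ofReal_natCast (2 ^ K), ← ENNReal.ofReal_mul (by positivity)]
          congr 1
          push_cast
          field_simp
  set S : Set (Fin n → Fin K) := {ω : Fin n → Fin K |
      ∑ k : Fin K, |p k - q ω k| ≤ lam} with hS
  have hSm : MeasurableSet S := (Set.toFinite S).measurableSet
  have hsub : Sᶜ ⊆ ⋃ A : Finset (Fin K), E A := by
    intro ω hω
    have hω' : ¬ (∑ k : Fin K, |p k - q ω k| ≤ lam) := hω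
    obtain ⟨A, hA⟩ := hincl ω hω'
    exact Set.mem_iUnion.2 ⟨A, hA⟩
  have hcompl : μ Sᶜ ≤ ENNReal.ofReal δ := le_trans (measure_mono hsub) hU
  have htotal : μ S + μ Sᶜ = 1 := by
    rw [measure_add_measure_compl hSm, measure_univ]
  have hfin : ENNReal.ofReal (1 - δ) ≤ μ S := by
    calc ENNReal.ofReal (1 - δ) = 1 - ENNReal.ofReal δ := by
          rw [ENNReal.ofReal_sub 1 hδ.le, ENNReal.ofReal_one]
      _ ≤ 1 - μ Sᶜ := tsub_le_tsub_left hcompl 1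
      _ = μ S := ENNReal.sub_eq_of_eq_add (measure_ne_top _ _) htotal.symm
  exact hfin
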